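/- For 0 ≤ k² < 1, define m via the series F(x) = Σ_{n≥0} ((1/2)_n)²/(n!)² xⁿ for |x| < 1 (Gauss hypergeometric ₂F₁(1/2,1/2,1;x)). Then ∫₀^{π/2} dφ/√(1 − k² sin²φ) = (π/2)·F(k²). -/

import Mathlib

open intervalIntegral Real

noncomputable def W (n : ℕ) : ℝ := ∏ i ∈ Finset.range n, (2 * (i:ℝ) + 1) / (2 * i + 2)

lemma W_zero : W 0 = 1 := by simp [W]

lemma W_succ (n : ℕ) : W (n + 1) = W n * ((2 * n + 1) / (2 * n + 2)) := by
  rw [W, W, Finset.prod_range_succ]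

lemma W_pos (n : ℕ) : 0 < W n := by
  refine Finset.prod_pos fun i _ => div_pos (by positivity) (by positivity)

lemma W_le_one (n : ℕ) : W n ≤ 1 := by
  refine Finset.prod_le_one (fun i _ => by positivity) fun i _ => ?_
  rw [div_le_one (by positivity)]; linarith

lemma W_rec (n : ℕ) : (2 * (n:ℝ) + 2) * W (n + 1) = (2 * n + 1) * W n := by
  rw [W_succ]; field_simp

lemma poch_eq (n : ℕ) :
    (ascPochhammer ℝ n).eval (1/2 : ℝ) = W n * (Nat.factorial n : ℝ) := by
  induction n with
  | zero => simp [W_zero]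
  | succ m ih =>
      rw [ascPochhammer_succ_eval, ih, W_succ, Nat.factorial_succ]
      push_cast
      field_simp
      ring

lemma wallis_int (n : ℕ) :
    (∫ x in (0:ℝ)..(π/2), Real.sin x ^ (2 * n)) = (π / 2) * W n := by
  induction n with
  | zero => simp [W_zero]
  | succ m ih =>
      have h := integral_sin_pow (2 * m) (a := 0) (b := π/2)
      have h2 : 2 * (m + 1) = 2 * m + 2 := by ring
      rw [h2, h, ih, Real.sin_zero, Real.cos_pi_div_two, W_succ]
      push_cast
      ring

lemma summable_aux {r : ℝ} (h0 : 0 ≤ r) (h1 : r < 1) :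
    Summable (fun n : ℕ => (n : ℝ) * r ^ (n - 1)) := by
  have a : Summable (fun n : ℕ => (n : ℝ) ^ 1 * r ^ n) :=
    summable_pow_mul_geometric_of_norm_lt_one 1
      (by rwa [Real.norm_eq_abs, abs_of_nonneg h0])
  have h : Summable (fun n : ℕ => ((n : ℝ) + 1) * r ^ n) := by
    have := a.add (summable_geometric_of_lt_one h0 h1)
    simpa [add_mul] using this
  refine (summable_nat_add_iff 1).mp ?_
  simpa using h

lemma summable_W_mul {y : ℝ} (hy : |y| < 1) :
    Summable (fun n : ℕ => W n * y ^ n) := by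
  refine Summable.of_norm_bounded (summable_geometric_of_lt_one (abs_nonneg y) hy) ?_
  intro n
  rw [norm_mul, Real.norm_eq_abs, Real.norm_eq_abs, abs_pow,
    abs_of_pos (W_pos n)]
  calc W n * |y| ^ n ≤ 1 * |y| ^ n := by
        gcongr; exact W_le_one n
    _ = |y| ^ n := one_mul _

lemma summable_W_deriv {y : ℝ} (hy : |y| < 1) :
    Summable (fun n : ℕ => W n * ((n : ℝ) * y ^ (n - 1))) := by
  refine Summable.of_norm_bounded (summable_aux (abs_nonneg y) hy) ?_
  intro n
  rw [norm_mul, norm_mul, Real.norm_eq_abs, Real.norm_eq_abs, Real.norm_eq_abs, abs_pow,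
    abs_of_pos (W_pos n), Nat.abs_cast]
  calc W n * ((n : ℝ) * |y| ^ (n - 1)) ≤ 1 * ((n : ℝ) * |y| ^ (n - 1)) := by
        gcongr; exact W_le_one n
    _ = _ := one_mul _

lemma deriv_sum_eq {y : ℝ} (hy : |y| < 1) :
    (∑' n : ℕ, W n * ((n : ℝ) * y ^ (n - 1))) * (2 * (1 - y))
      = ∑' n : ℕ, W n * y ^ n := by
  set A := ∑' n : ℕ, W n * ((n : ℝ) * y ^ (n - 1)) with hAdef
  have hA : HasSum (fun n : ℕ => W n * ((n : ℝ) * y ^ (n - 1))) A :=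
    (summable_W_deriv hy).hasSum
  have hA' : HasSum (fun n : ℕ => W (n + 1) * (((n : ℝ) + 1) * y ^ n)) A := by
    have h := (hasSum_nat_add_iff (f := fun n : ℕ => W n * ((n : ℝ) * y ^ (n - 1)))
      (g := A) 1).2 (by simpa using hA)
    simpa using h
  have hB : HasSum (fun n : ℕ => (2 * (n : ℝ) + 1) * W n * y ^ n) (2 * A) := by
    have h := hA'.mul_left 2
    have heq : (fun n : ℕ => 2 * (W (n + 1) * (((n : ℝ) + 1) * y ^ n)))
        = fun n : ℕ => (2 * (n : ℝ) + 1) * W n * y ^ n := by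
      funext n
      have hr := W_rec n
      calc 2 * (W (n + 1) * (((n : ℝ) + 1) * y ^ n))
          = ((2 * (n : ℝ) + 2) * W (n + 1)) * y ^ n := by ring
        _ = ((2 * (n : ℝ) + 1) * W n) * y ^ n := by rw [hr]
        _ = _ := by ring
    rwa [heq] at h
  have hD : HasSum (fun n : ℕ => 2 * (n : ℝ) * W n * y ^ n) (2 * y * A) := by
    have h := hA'.mul_left (2 * y)
    have heq : (fun n : ℕ => 2 * y * (W (n + 1) * (((n : ℝ) + 1) * y ^ n)))
        = fun n : ℕ => 2 * ((n : ℝ) + 1) * W (n + 1) * y ^ (n + 1) := by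
      funext n; ring
    rw [heq] at h
    have h2 : HasSum (fun n : ℕ =>
        (fun m : ℕ => 2 * (m : ℝ) * W m * y ^ m) (n + 1)) (2 * y * A) := by
      convert h using 2 with n
      · rfl
      · push_cast; ring
    have h3 := (hasSum_nat_add_iff (f := fun m : ℕ => 2 * (m : ℝ) * W m * y ^ m)
      (g := 2 * y * A) 1).1 h2
    simpa using h3
  have hC := hB.sub hD
  have heq : (fun n : ℕ => (2 * (n : ℝ) + 1) * W n * y ^ n - 2 * (n : ℝ) * W n * y ^ n)
      = fun n : ℕ => W n * y ^ n := by
    funext n; ring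
  rw [heq] at hC
  rw [hC.tsum_eq]
  ring

lemma hasSum_W {x : ℝ} (hx0 : 0 ≤ x) (hx1 : x < 1) :
    HasSum (fun n : ℕ => W n * x ^ n) (1 / Real.sqrt (1 - x)) := by
  set r : ℝ := (1 + x) / 2 with hrdef
  have hxr : x < r := by rw [hrdef]; linarith
  have hr1 : r < 1 := by rw [hrdef]; linarith
  have hr0 : 0 < r := by rw [hrdef]; linarith
  set t : Set ℝ := Set.Ioo (-r) r with htdef
  have hmem : ∀ y ∈ t, |y| < 1 := fun y hy =>
    lt_trans (abs_lt.2 ⟨hy.1, hy.2⟩) hr1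
  have hu : Summable (fun n : ℕ => (n : ℝ) * r ^ (n - 1)) := summable_aux hr0.le hr1
  have h0t : (0 : ℝ) ∈ t := ⟨by linarith, hr0⟩
  have hderiv : ∀ y ∈ t, HasDerivAt (fun z : ℝ => ∑' n : ℕ, W n * z ^ n)
      (∑' n : ℕ, W n * ((n : ℝ) * y ^ (n - 1))) y := by
    intro y hy
    refine hasDerivAt_tsum_of_isPreconnected hu isOpen_Ioo
      (convex_Ioo _ _).isPreconnected
      (fun n z _ => (hasDerivAt_pow n z).const_mul (W n)) (fun n z hz => ?_) h0t ?_ hy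
    · rw [Real.norm_eq_abs, abs_mul, abs_mul, abs_pow, abs_of_pos (W_pos n), Nat.abs_cast]
      have hzr : |z| ≤ r := le_of_lt (abs_lt.2 ⟨hz.1, hz.2⟩)
      calc W n * ((n : ℝ) * |z| ^ (n - 1))
          ≤ 1 * ((n : ℝ) * |z| ^ (n - 1)) :=
            mul_le_mul_of_nonneg_right (W_le_one n) (by positivity)
        _ = (n : ℝ) * |z| ^ (n - 1) := one_mul _
        _ ≤ (n : ℝ) * r ^ (n - 1) := by
            exact mul_le_mul_of_nonneg_left
              (pow_le_pow_left₀ (abs_nonneg z) hzr _) (Nat.cast_nonneg n)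
    · refine summable_of_ne_finset_zero (s := {0}) fun n hn => ?_
      have : n ≠ 0 := by simpa using hn
      simp [zero_pow this]
  have hG : ∀ y ∈ t, HasDerivAt
      (fun z : ℝ => Real.sqrt (1 - z) * ∑' n : ℕ, W n * z ^ n) 0 y := by
    intro y hy
    have h1y : (0 : ℝ) < 1 - y := by have := hy.2; simp only [htdef, Set.mem_Ioo] at hy; linarith [hy.2]
    have hinner : HasDerivAt (fun z : ℝ => 1 - z) (-1) y := by
      simpa using (hasDerivAt_id y).const_sub 1
    have hsqrt : HasDerivAt (fun z : ℝ => Real.sqrt (1 - z))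
        (1 / (2 * Real.sqrt (1 - y)) * (-1)) y :=
      (Real.hasDerivAt_sqrt h1y.ne').comp y hinner
    have hprod := hsqrt.mul (hderiv y hy)
    have hsne : Real.sqrt (1 - y) ≠ 0 := (Real.sqrt_pos.2 h1y).ne'
    have hs2 : Real.sqrt (1 - y) ^ 2 = 1 - y := Real.sq_sqrt h1y.le
    have hkey := deriv_sum_eq (hmem y hy)
    have hval : 1 / (2 * Real.sqrt (1 - y)) * (-1) * (∑' n : ℕ, W n * y ^ n)
        + Real.sqrt (1 - y) * (∑' n : ℕ, W n * ((n : ℝ) * y ^ (n - 1))) = 0 := by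
      rw [← hkey]
      rw [← hs2]
      have hms : Real.sqrt (1 - y) * Real.sqrt (1 - y) = 1 - y :=
        Real.mul_self_sqrt h1y.le
      field_simp
      have hsq : Real.sqrt (Real.sqrt (1 - y) ^ 2) ^ 2 = Real.sqrt (1 - y) ^ 2 :=
        Real.sq_sqrt (by positivity)
      linear_combination (∑' n : ℕ, W n * (n : ℝ) * y ^ (n - 1)) * hsq
    rw [← hval]
    exact hprod
  -- constancy on [0, x]
  have hsub : Set.Icc (0:ℝ) x ⊆ t := fun y hy =>
    ⟨by linarith [hy.1], by linarith [hy.2]⟩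
  have hcont : ContinuousOn (fun z : ℝ => Real.sqrt (1 - z) * ∑' n : ℕ, W n * z ^ n)
      (Set.Icc 0 x) := fun y hy =>
    ((hG y (hsub hy)).continuousAt).continuousWithinAt
  have hd : ∀ y ∈ Set.Ico (0:ℝ) x, HasDerivWithinAt
      (fun z : ℝ => Real.sqrt (1 - z) * ∑' n : ℕ, W n * z ^ n) 0 (Set.Ici y) y :=
    fun y hy => (hG y (hsub ⟨hy.1, hy.2.le⟩)).hasDerivWithinAt
  have hconst := constant_of_has_deriv_right_zero hcont hd x
    (Set.mem_Icc.2 ⟨hx0, le_refl x⟩)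
  have hS0 : (∑' n : ℕ, W n * (0:ℝ) ^ n) = 1 := by
    rw [tsum_eq_single 0 (fun n hn => by simp [zero_pow hn])]
    simp [W_zero]
  rw [hS0] at hconst
  simp only [sub_zero, Real.sqrt_one, mul_one] at hconst
  have hsxne : Real.sqrt (1 - x) ≠ 0 := (Real.sqrt_pos.2 (by linarith)).ne'
  have hSx : (∑' n : ℕ, W n * x ^ n) = 1 / Real.sqrt (1 - x) := by
    rw [eq_div_iff hsxne, mul_comm]
    exact hconst
  have := (summable_W_mul (by rw [abs_of_nonneg hx0]; exact hx1)).hasSum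
  rwa [hSx] at this

theorem stmt_6 (k : ℝ) (hk : 0 ≤ k) (hk1 : k ^ 2 < 1) :
    (∫ φ in (0:ℝ)..(π / 2), 1 / Real.sqrt (1 - k ^ 2 * Real.sin φ ^ 2))
      = (π / 2) * ∑' n : ℕ,
          ((ascPochhammer ℝ n).eval (1/2 : ℝ)) ^ 2 / (Nat.factorial n : ℝ) ^ 2 * (k ^ 2) ^ n := by
  have hk2 : (0:ℝ) ≤ k ^ 2 := sq_nonneg k
  have hcoef : ∀ n : ℕ, ((ascPochhammer ℝ n).eval (1/2 : ℝ)) ^ 2 / (Nat.factorial n : ℝ) ^ 2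
      * (k ^ 2) ^ n = W n ^ 2 * (k ^ 2) ^ n := by
    intro n
    have hfne : (Nat.factorial n : ℝ) ≠ 0 := Nat.cast_ne_zero.2 n.factorial_ne_zero
    rw [poch_eq]
    field_simp
  simp_rw [hcoef]
  set F : ℕ → ℝ → ℝ := fun n φ => W n * (k ^ 2) ^ n * Real.sin φ ^ (2 * n) with hFdef
  have hFnonneg : ∀ n φ, 0 ≤ F n φ := by
    intro n φ
    have h1 : (0:ℝ) ≤ Real.sin φ ^ (2 * n) := Even.pow_nonneg (even_two_mul n) _
    have h2 := (W_pos n).le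
    rw [hFdef]
    positivity
  have hpt : ∀ φ : ℝ, (∑' n : ℕ, F n φ) = 1 / Real.sqrt (1 - k ^ 2 * Real.sin φ ^ 2) := by
    intro φ
    have hs1 : Real.sin φ ^ 2 ≤ 1 := by
      nlinarith [Real.neg_one_le_sin φ, Real.sin_le_one φ]
    have h0 : 0 ≤ k ^ 2 * Real.sin φ ^ 2 := by positivity
    have h1 : k ^ 2 * Real.sin φ ^ 2 < 1 := by nlinarith
    have hhs := (hasSum_W h0 h1).tsum_eq
    have heq : (fun n : ℕ => W n * (k ^ 2 * Real.sin φ ^ 2) ^ n) = fun n => F n φ := by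
      funext n
      rw [hFdef]
      simp only [mul_pow, pow_mul]
      ring
    rw [heq] at hhs
    exact hhs
  have hle : (0:ℝ) ≤ π / 2 := by positivity
  rw [intervalIntegral.integral_of_le hle]
  set μ := MeasureTheory.volume.restrict (Set.Ioc (0:ℝ) (π/2)) with hμ
  have hFint : ∀ n, MeasureTheory.Integrable (F n) μ := by
    intro n
    exact Continuous.integrableOn_Ioc (by fun_prop)
  have hFval : ∀ n, (∫ φ, F n φ ∂μ) = W n ^ 2 * (k ^ 2) ^ n * (π / 2) := by
    intro n
    have h1 : (∫ φ, F n φ ∂μ)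
        = W n * (k ^ 2) ^ n * ∫ φ, Real.sin φ ^ (2 * n) ∂μ := by
      rw [hFdef]
      exact MeasureTheory.integral_const_mul _ _
    have h2 : (∫ φ, Real.sin φ ^ (2 * n) ∂μ) = (π / 2) * W n := by
      rw [← intervalIntegral.integral_of_le hle]
      exact wallis_int n
    rw [h1, h2]
    ring
  have hnorm : ∀ n, (∫ φ, ‖F n φ‖ ∂μ) = W n ^ 2 * (k ^ 2) ^ n * (π / 2) := by
    intro n
    rw [← hFval n]
    congr 1
    funext φ
    exact Real.norm_of_nonneg (hFnonneg n φ)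
  have hsum : Summable (fun n => ∫ φ, ‖F n φ‖ ∂μ) := by
    simp only [hnorm]
    apply Summable.mul_right
    refine Summable.of_nonneg_of_le (fun n => by positivity) (fun n => ?_)
      (summable_geometric_of_lt_one hk2 hk1)
    have hW1 : W n ^ 2 ≤ 1 := by nlinarith [W_pos n, W_le_one n]
    calc W n ^ 2 * (k ^ 2) ^ n ≤ 1 * (k ^ 2) ^ n :=
          mul_le_mul_of_nonneg_right hW1 (by positivity)
      _ = (k ^ 2) ^ n := one_mul _
  have hinter := MeasureTheory.integral_tsum_of_summable_integral_norm hFint hsum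
  calc (∫ φ in Set.Ioc (0:ℝ) (π/2), 1 / Real.sqrt (1 - k ^ 2 * Real.sin φ ^ 2))
      = ∫ φ, (∑' n : ℕ, F n φ) ∂μ := by
        rw [hμ]
        exact MeasureTheory.integral_congr_ae (Filter.Eventually.of_forall
          fun φ => (hpt φ).symm)
    _ = ∑' n : ℕ, ∫ φ, F n φ ∂μ := hinter.symm
    _ = ∑' n : ℕ, W n ^ 2 * (k ^ 2) ^ n * (π / 2) := tsum_congr hFval
    _ = (π / 2) * ∑' n : ℕ, W n ^ 2 * (k ^ 2) ^ n := by
        rw [tsum_mul_right]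
        ring
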